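/- Fix α ∈ [0,1) and define y_α(t) = √t · (Ω(F⁻¹(α/t)) - F⁻¹(α/t))/2 for t ∈ [α, 1] (with t > 0). Then y_α is strictly increasing in t on (max(α, 0), 1]. -/

import Mathlib

/-- The Logan-Shepp-Vershik-Kerov limit shape curve in rotated coordinates. -/
noncomputable def Omega (u : ℝ) : ℝ :=
  (2 / Real.pi) * (u * Real.arcsin (u / 2) + Real.sqrt (4 - u ^ 2))

/-- The semicircle cumulative distribution function formula. -/
noncomputable def Fsc (u : ℝ) : ℝ :=
  1 / 2 + (1 / Real.pi) * (u * Real.sqrt (4 - u ^ 2) / 4 + Real.arcsin (u / 2))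

lemma hasDerivAt_sqrt4 (x : ℝ) (hx : x ^ 2 < 4) :
    HasDerivAt (fun u : ℝ => Real.sqrt (4 - u ^ 2)) (-x / Real.sqrt (4 - x ^ 2)) x := by
  have h2 : (0:ℝ) < 4 - x ^ 2 := by linarith
  have h : HasDerivAt (fun u : ℝ => 4 - u ^ 2) (-(2 * x)) x := by
    simpa using ((hasDerivAt_pow 2 x).const_sub 4)
  have hs : (0:ℝ) < Real.sqrt (4 - x ^ 2) := Real.sqrt_pos.mpr h2
  have := (Real.hasDerivAt_sqrt (ne_of_gt h2)).comp x h
  refine this.congr_deriv ?_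
  field_simp

lemma hasDerivAt_arcsin_half (x : ℝ) (hx : x ^ 2 < 4) :
    HasDerivAt (fun u : ℝ => Real.arcsin (u / 2)) (1 / Real.sqrt (4 - x ^ 2)) x := by
  have hx2 : -2 < x ∧ x < 2 := by constructor <;> nlinarith
  have h1 : x / 2 ≠ -1 := by intro h; nlinarith [hx2.1]
  have h2 : x / 2 ≠ 1 := by intro h; nlinarith [hx2.2]
  have hd := (Real.hasDerivAt_arcsin h1 h2).comp x ((hasDerivAt_id x).div_const 2)
  refine hd.congr_deriv ?_
  have key : Real.sqrt (1 - (x / 2) ^ 2) = Real.sqrt (4 - x ^ 2) / 2 := by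
    rw [show (1 : ℝ) - (x / 2) ^ 2 = (4 - x ^ 2) / 4 by ring,
      Real.sqrt_div (by linarith), show Real.sqrt 4 = 2 by
        rw [show (4:ℝ) = 2 ^ 2 by norm_num, Real.sqrt_sq (by norm_num)]]
  rw [key]
  have hs : (0:ℝ) < Real.sqrt (4 - x ^ 2) := Real.sqrt_pos.mpr (by linarith)
  field_simp

lemma fsc_strictMono : StrictMonoOn Fsc (Set.Icc (-2 : ℝ) 2) := by
  have hcont : Continuous Fsc := by
    unfold Fsc
    continuity
  apply strictMonoOn_of_deriv_pos (convex_Icc _ _) hcont.continuousOn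
  intro x hx
  rw [interior_Icc] at hx
  have hx2 : x ^ 2 < 4 := by nlinarith [hx.1, hx.2]
  have h1 := hasDerivAt_sqrt4 x hx2
  have h2 := hasDerivAt_arcsin_half x hx2
  set s := Real.sqrt (4 - x ^ 2) with hs_def
  have hs : (0:ℝ) < s := Real.sqrt_pos.mpr (by linarith)
  have hs2 : s ^ 2 = 4 - x ^ 2 := Real.sq_sqrt (by linarith)
  have h3 : HasDerivAt (fun u : ℝ => u * Real.sqrt (4 - u ^ 2)) (1 * s + x * (-x / s)) x :=
    (hasDerivAt_id x).mul h1
  have h4 : HasDerivAt Fsc ((1 / Real.pi) * ((1 * s + x * (-x / s)) / 4 + 1 / s)) x := by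
    exact (((h3.div_const 4).add h2).const_mul (1 / Real.pi)).const_add (1 / 2)
  rw [h4.deriv]
  have hpi := Real.pi_pos
  have key : (1 * s + x * (-x / s)) / 4 + 1 / s = (8 - 2 * x ^ 2) / (4 * s) := by
    field_simp
    linear_combination hs2
  rw [key]
  have : (0:ℝ) < 8 - 2 * x ^ 2 := by linarith
  positivity

lemma g_strictAnti : StrictAntiOn (fun u => Omega u - u) (Set.Icc (-2 : ℝ) 2) := by
  have hcont : Continuous (fun u => Omega u - u) := by
    unfold Omega
    continuity
  apply strictAntiOn_of_deriv_neg (convex_Icc _ _) hcont.continuousOn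
  intro x hx
  rw [interior_Icc] at hx
  have hx2 : x ^ 2 < 4 := by nlinarith [hx.1, hx.2]
  have h1 := hasDerivAt_sqrt4 x hx2
  have h2 := hasDerivAt_arcsin_half x hx2
  set s := Real.sqrt (4 - x ^ 2) with hs_def
  have h3 : HasDerivAt (fun u : ℝ => u * Real.arcsin (u / 2))
      (1 * Real.arcsin (x / 2) + x * (1 / s)) x := (hasDerivAt_id x).mul h2
  have h4 : HasDerivAt (fun u => Omega u - u)
      ((2 / Real.pi) * ((1 * Real.arcsin (x / 2) + x * (1 / s)) + -x / s) - 1) x := by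
    have := (((h3.add h1).const_mul (2 / Real.pi)).sub (hasDerivAt_id x))
    exact this
  rw [h4.deriv]
  have hpi := Real.pi_pos
  have key : (2 / Real.pi) * ((1 * Real.arcsin (x / 2) + x * (1 / s)) + -x / s) - 1
      = (2 / Real.pi) * Real.arcsin (x / 2) - 1 := by ring
  rw [key]
  have harc : Real.arcsin (x / 2) < Real.pi / 2 :=
    Real.arcsin_lt_pi_div_two.mpr (by nlinarith [hx.2])
  have h5 : (2 / Real.pi) * Real.arcsin (x / 2) < (2 / Real.pi) * (Real.pi / 2) :=
    mul_lt_mul_of_pos_left harc (by positivity)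
  have h6 : (2 / Real.pi) * (Real.pi / 2) = 1 := by field_simp
  linarith

lemma fsc_two : Fsc 2 = 1 := by
  have hpi := Real.pi_pos
  have : Real.sqrt (4 - (2:ℝ) ^ 2) = 0 := by norm_num
  rw [Fsc, this, show (2:ℝ)/2 = 1 by norm_num, Real.arcsin_one]
  field_simp
  ring

lemma omega_two : Omega 2 = 2 := by
  have hpi := Real.pi_pos
  have : Real.sqrt (4 - (2:ℝ) ^ 2) = 0 := by norm_num
  rw [Omega, this, show (2:ℝ)/2 = 1 by norm_num, Real.arcsin_one]
  field_simp
  ring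

/-- For fixed `α ∈ [0,1)`, the function `y_α(t) = √t · (Ω(F⁻¹(α/t)) - F⁻¹(α/t))/2` is
strictly increasing in `t` on `(max(α,0), 1]`. -/
theorem yAlpha_strictMonoOn (Finv : ℝ → ℝ)
    (hFinv_mem : ∀ a ∈ Set.Icc (0 : ℝ) 1, Finv a ∈ Set.Icc (-2 : ℝ) 2)
    (hFinv_right : ∀ a ∈ Set.Icc (0 : ℝ) 1, Fsc (Finv a) = a)
    (hFinv_left : ∀ u ∈ Set.Icc (-2 : ℝ) 2, Finv (Fsc u) = u)
    (α : ℝ) (hα : α ∈ Set.Ico (0 : ℝ) 1) :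
    StrictMonoOn (fun t => Real.sqrt t * (Omega (Finv (α / t)) - Finv (α / t)) / 2)
      (Set.Ioc (max α 0) 1) := by
  obtain ⟨hα0, hα1⟩ := hα
  intro t ht t' ht' htt'
  have ht0 : 0 < t := lt_of_le_of_lt (le_max_right α 0) ht.1
  have ht'0 : 0 < t' := lt_trans ht0 htt'
  have htα : α < t := lt_of_le_of_lt (le_max_left α 0) ht.1
  have ht'α : α < t' := lt_trans htα htt'
  have ha1 : α / t < 1 := (div_lt_one ht0).mpr htα
  have ha_mem : α / t ∈ Set.Icc (0:ℝ) 1 := ⟨div_nonneg hα0 ht0.le, ha1.le⟩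
  have ha'_mem : α / t' ∈ Set.Icc (0:ℝ) 1 :=
    ⟨div_nonneg hα0 ht'0.le, ((div_lt_one ht'0).mpr ht'α).le⟩
  have haa' : α / t' ≤ α / t := by gcongr
  have hu := hFinv_mem _ ha_mem
  have hu' := hFinv_mem _ ha'_mem
  have hFu := hFinv_right _ ha_mem
  have hFu' := hFinv_right _ ha'_mem
  have hu'le : Finv (α / t') ≤ Finv (α / t) := by
    by_contra h
    push_neg at h
    have := fsc_strictMono hu hu' h
    rw [hFu, hFu'] at this
    exact absurd this (not_lt.mpr haa')
  have hu2 : Finv (α / t) < 2 := by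
    rcases lt_or_eq_of_le hu.2 with h | h
    · exact h
    · exfalso
      rw [h, fsc_two] at hFu
      linarith
  have h2mem : (2:ℝ) ∈ Set.Icc (-2:ℝ) 2 := by norm_num
  have hGu_pos : 0 < Omega (Finv (α / t)) - Finv (α / t) := by
    have := g_strictAnti hu h2mem hu2
    simp only [omega_two, sub_self] at this
    exact this
  have hGle : Omega (Finv (α / t)) - Finv (α / t)
      ≤ Omega (Finv (α / t')) - Finv (α / t') :=
    g_strictAnti.antitoneOn hu' hu hu'le
  have hsqrt : Real.sqrt t < Real.sqrt t' := Real.sqrt_lt_sqrt ht0.le htt'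
  have hsq0 : (0:ℝ) ≤ Real.sqrt t' := Real.sqrt_nonneg _
  simp only
  have c1 : Real.sqrt t * (Omega (Finv (α / t)) - Finv (α / t))
      < Real.sqrt t' * (Omega (Finv (α / t)) - Finv (α / t)) :=
    mul_lt_mul_of_pos_right hsqrt hGu_pos
  have c2 : Real.sqrt t' * (Omega (Finv (α / t)) - Finv (α / t))
      ≤ Real.sqrt t' * (Omega (Finv (α / t')) - Finv (α / t')) :=
    mul_le_mul_of_nonneg_left hGle hsq0
  linarith
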